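/- Let k be a field, S = k[x_1,…,x_q] a polynomial ring, λ an integral weight function on S, and g_1,…,g_N nonzero polynomials in S. Define the integral weight function λ̃ on S[ε_1,…,ε_N] by λ̃(x_j) = λ(x_j) and λ̃(ε_i) = (the maximal λ-weight of a term of g_i) = λ-weight of in_λ(g_i). Then for every nonzero f in the ideal (ε_1,…,ε_N) of S[ε_1,…,ε_N] such that substituting ε_i ↦ g_i into f yields 0, the λ̃-initial form in_{λ̃}(f) again lies in (ε_1,…,ε_N) and substituting ε_i ↦ in_λ(g_i) into in_{λ̃}(f) yields 0. In other words, the λ̃-initial form of any syzygy of (g_1,…,g_N) is a syzygy of the initial forms (in_λ(g_1),…,in_λ(g_N)). -/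

import Mathlib

open MvPolynomial

noncomputable section

/-- The `λ`-weight of a monomial exponent vector: weights extend additively to monomials. -/
def monWeight {σ : Type*} (lam : σ → ℤ) (d : σ →₀ ℕ) : ℤ :=
  d.sum fun i m => (m : ℤ) * lam i

/-- The initial form `in_λ(f)`: the sum of the terms of `f` of maximal `λ`-weight. -/
def initialForm {σ K : Type*} [CommSemiring K] (lam : σ → ℤ) (f : MvPolynomial σ K) :
    MvPolynomial σ K :=
  ∑ d ∈ f.support.filter
      (fun d => ∀ e ∈ f.support, monWeight lam e ≤ monWeight lam d),
    monomial d (coeff d f)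

/-- The maximal `λ`-weight of a term of `f` (with junk value `0` for `f = 0`);
this is the `λ`-weight of `in_λ(f)`. -/
def maxWeight {σ K : Type*} [CommSemiring K] (lam : σ → ℤ) (f : MvPolynomial σ K) : ℤ :=
  (f.support.image (monWeight lam)).max.unbotD 0

section Aux

variable {σ K : Type*} [CommSemiring K]

theorem monWeight_eq_weight (lam : σ → ℤ) (d : σ →₀ ℕ) :
    monWeight lam d = Finsupp.weight lam d := by
  simp [monWeight, Finsupp.weight_apply, Finsupp.sum, mul_comm]

theorem le_maxWeight (lam : σ → ℤ) {f : MvPolynomial σ K} {d : σ →₀ ℕ}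
    (hd : d ∈ f.support) : monWeight lam d ≤ maxWeight lam f := by
  have h1 : monWeight lam d ∈ f.support.image (monWeight lam) :=
    Finset.mem_image_of_mem _ hd
  obtain ⟨m, hm⟩ := Finset.max_of_nonempty ⟨_, h1⟩
  have h2 := Finset.le_max h1
  rw [hm] at h2
  rw [maxWeight, hm, WithBot.unbotD_coe]
  exact_mod_cast h2

theorem exists_maxWeight (lam : σ → ℤ) {f : MvPolynomial σ K} (hf : f ≠ 0) :
    ∃ d ∈ f.support, monWeight lam d = maxWeight lam f := by
  have h3 : (f.support.image (monWeight lam)).Nonempty := by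
    rw [Finset.image_nonempty, Finset.nonempty_iff_ne_empty]
    simpa [MvPolynomial.support_eq_empty] using hf
  obtain ⟨m, hm⟩ := Finset.max_of_nonempty h3
  obtain ⟨d, hd, hdm⟩ := Finset.mem_image.mp (Finset.mem_of_max hm)
  exact ⟨d, hd, by rw [hdm, maxWeight, hm, WithBot.unbotD_coe]⟩

theorem initialForm_eq (lam : σ → ℤ) (f : MvPolynomial σ K) (hf : f ≠ 0) :
    initialForm lam f = weightedHomogeneousComponent lam (maxWeight lam f) f := by
  classical
  rw [initialForm, weightedHomogeneousComponent_apply]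
  refine Finset.sum_congr ?_ (fun _ _ => rfl)
  refine Finset.filter_congr ?_
  intro d hd
  simp only [← monWeight_eq_weight]
  constructor
  · intro h
    obtain ⟨d0, hd0, hd0e⟩ := exists_maxWeight lam hf
    exact le_antisymm (le_maxWeight lam hd) (hd0e ▸ h d0 hd0)
  · intro h e he
    rw [h]; exact le_maxWeight lam he

/-- All monomials of `p` have `lam`-weight at most `w`. -/
def Bdd (lam : σ → ℤ) (w : ℤ) (p : MvPolynomial σ K) : Prop :=
  ∀ d ∈ p.support, Finsupp.weight lam d ≤ w

theorem bdd_maxWeight (lam : σ → ℤ) (f : MvPolynomial σ K) :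
    Bdd lam (maxWeight lam f) f := by
  intro d hd
  rw [← monWeight_eq_weight]
  exact le_maxWeight lam hd

theorem bdd_C (lam : σ → ℤ) (c : K) : Bdd lam 0 (C c : MvPolynomial σ K) := by
  classical
  intro d hd
  rw [mem_support_iff, coeff_C] at hd
  split_ifs at hd with h
  · rw [← h, map_zero]
  · exact absurd rfl hd

theorem bdd_one (lam : σ → ℤ) : Bdd lam 0 (1 : MvPolynomial σ K) := by
  rw [← C_1]; exact bdd_C lam 1

theorem comp_eq_zero_of_lt {lam : σ → ℤ} {w n : ℤ} {p : MvPolynomial σ K}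
    (hp : Bdd lam w p) (hwn : w < n) :
    weightedHomogeneousComponent lam n p = 0 := by
  classical
  ext e
  rw [coeff_weightedHomogeneousComponent, coeff_zero]
  split_ifs with h
  · by_contra hc
    have := hp e (mem_support_iff.mpr hc)
    omega
  · rfl

theorem comp_eq_self_of_homog {lam : σ → ℤ} {n : ℤ} {p : MvPolynomial σ K}
    (hp : p.IsWeightedHomogeneous lam n) :
    weightedHomogeneousComponent lam n p = p := by
  classical
  ext e
  rw [coeff_weightedHomogeneousComponent]
  split_ifs with h
  · rfl
  · exact (hp.coeff_eq_zero e h).symm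

theorem Bdd.mul {lam : σ → ℤ} {w w' : ℤ} {p q : MvPolynomial σ K}
    (hp : Bdd lam w p) (hq : Bdd lam w' q) : Bdd lam (w + w') (p * q) := by
  classical
  intro d hd
  obtain ⟨a, ha, b, hb, hab⟩ := Finset.mem_add.mp (support_mul p q hd)
  rw [← hab, map_add]
  exact add_le_add (hp a ha) (hq b hb)

theorem comp_mul {lam : σ → ℤ} {w w' : ℤ} {p q : MvPolynomial σ K}
    (hp : Bdd lam w p) (hq : Bdd lam w' q) :
    weightedHomogeneousComponent lam (w + w') (p * q) =
      weightedHomogeneousComponent lam w p * weightedHomogeneousComponent lam w' q := by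
  classical
  ext e
  rw [coeff_weightedHomogeneousComponent]
  split_ifs with h
  · rw [coeff_mul, coeff_mul]
    refine Finset.sum_congr rfl ?_
    rintro ⟨a, b⟩ hab
    have hab' : a + b = e := Finset.HasAntidiagonal.mem_antidiagonal.mp hab
    rw [coeff_weightedHomogeneousComponent, coeff_weightedHomogeneousComponent]
    by_cases h1 : coeff a p = 0
    · simp [h1]
    by_cases h2 : coeff b q = 0
    · simp [h2]
    have ha := hp a (mem_support_iff.mpr h1)
    have hb := hq b (mem_support_iff.mpr h2)
    have hsum : Finsupp.weight lam a + Finsupp.weight lam b = w + w' := by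
      rw [← map_add, hab', h]
    have hwa : Finsupp.weight lam a = w := by omega
    have hwb : Finsupp.weight lam b = w' := by omega
    rw [if_pos hwa, if_pos hwb]
  · exact (((weightedHomogeneousComponent_isWeightedHomogeneous w p).mul
      (weightedHomogeneousComponent_isWeightedHomogeneous w' q)).coeff_eq_zero e h).symm

theorem comp_pow {lam : σ → ℤ} {w : ℤ} {p : MvPolynomial σ K} (hp : Bdd lam w p) (n : ℕ) :
    Bdd lam (n * w) (p ^ n) ∧
      weightedHomogeneousComponent lam (n * w) (p ^ n) =
        (weightedHomogeneousComponent lam w p) ^ n := by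
  induction n with
  | zero =>
    simp only [Nat.cast_zero, zero_mul, pow_zero]
    exact ⟨bdd_one lam, comp_eq_self_of_homog (isWeightedHomogeneous_one K lam)⟩
  | succ n ih =>
    have hcast : ((n + 1 : ℕ) : ℤ) * w = (n : ℤ) * w + w := by push_cast; ring
    rw [pow_succ, hcast]
    exact ⟨ih.1.mul hp, by rw [comp_mul ih.1 hp, ih.2, pow_succ]⟩

theorem comp_prod {lam : σ → ℤ} {ι : Type*} (s : Finset ι) (p : ι → MvPolynomial σ K)
    (w : ι → ℤ) :
    (∀ i ∈ s, Bdd lam (w i) (p i)) →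
    Bdd lam (∑ i ∈ s, w i) (∏ i ∈ s, p i) ∧
      weightedHomogeneousComponent lam (∑ i ∈ s, w i) (∏ i ∈ s, p i) =
        ∏ i ∈ s, weightedHomogeneousComponent lam (w i) (p i) := by
  classical
  induction s using Finset.induction with
  | empty =>
    intro _
    simp only [Finset.sum_empty, Finset.prod_empty]
    exact ⟨bdd_one lam, comp_eq_self_of_homog (isWeightedHomogeneous_one K lam)⟩
  | @insert a s ha ih =>
    intro h
    rw [Finset.sum_insert ha, Finset.prod_insert ha]
    have h1 := h a (Finset.mem_insert_self a s)
    have ihh := ih (fun i hi => h i (Finset.mem_insert_of_mem hi))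
    refine ⟨h1.mul ihh.1, ?_⟩
    rw [comp_mul h1 ihh.1, ihh.2, Finset.prod_insert ha]

theorem aeval_monomial' {σ' : Type*} (S : σ' → MvPolynomial σ K) (d : σ' →₀ ℕ) (c : K) :
    aeval S (monomial d c) = C c * ∏ j ∈ d.support, (S j) ^ (d j) := by
  rw [aeval_monomial, algebraMap_eq]
  rfl

theorem comp_aeval_monomial {σ' : Type*} {lam : σ → ℤ} (W : σ' → ℤ)
    (S : σ' → MvPolynomial σ K) (hS : ∀ j, Bdd lam (W j) (S j))
    (d : σ' →₀ ℕ) (c : K) :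
    Bdd lam (Finsupp.weight W d) (aeval S (monomial d c)) ∧
      weightedHomogeneousComponent lam (Finsupp.weight W d) (aeval S (monomial d c)) =
        C c * ∏ j ∈ d.support, (weightedHomogeneousComponent lam (W j) (S j)) ^ (d j) := by
  classical
  rw [aeval_monomial']
  have hw : (Finsupp.weight W d : ℤ) = ∑ j ∈ d.support, ((d j : ℤ) * W j) := by
    rw [Finsupp.weight_apply, Finsupp.sum]
    refine Finset.sum_congr rfl fun j _ => ?_
    simp
  have hprod := comp_prod d.support (fun j => (S j) ^ (d j)) (fun j => ((d j : ℤ) * W j))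
      (fun j _ => (comp_pow (hS j) (d j)).1)
  have hC := bdd_C lam c
  constructor
  · rw [hw]
    have := hC.mul hprod.1
    rwa [zero_add] at this
  · rw [hw, show (∑ j ∈ d.support, ((d j : ℤ) * W j))
        = 0 + ∑ j ∈ d.support, ((d j : ℤ) * W j) from (zero_add _).symm,
      comp_mul hC hprod.1, comp_eq_self_of_homog (isWeightedHomogeneous_C lam c), hprod.2]
    congr 1
    exact Finset.prod_congr rfl fun j _ => (comp_pow (hS j) (d j)).2

end Aux

/-- Let `S = k[x_1,…,x_q]`, `λ` an integral weight function and
`g_1,…,g_N` nonzero polynomials.  Define `λ̃` on `S[ε_1,…,ε_N]` by `λ̃(x_j) = λ(x_j)`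
and `λ̃(ε_i) = λ(in_λ(g_i))`.  Then for every nonzero `f ∈ (ε_1,…,ε_N)` with
`f(ε_i ↦ g_i) = 0`, the initial form `in_{λ̃}(f)` again lies in `(ε_1,…,ε_N)` and satisfies
`in_{λ̃}(f)(ε_i ↦ in_λ(g_i)) = 0`: the `λ̃`-initial form of a syzygy of `(g_1,…,g_N)` is a
syzygy of the initial forms `(in_λ(g_1),…,in_λ(g_N))`. -/
theorem initialForm_syzygy_is_syzygy_of_initialForms
    {k : Type*} [Field k] (q N : ℕ) (lam : Fin q → ℤ)
    (g : Fin N → MvPolynomial (Fin q) k)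
    (hg0 : ∀ i, g i ≠ 0)
    (f : MvPolynomial (Fin q ⊕ Fin N) k) (hf : f ≠ 0)
    (hfε : f ∈ Ideal.span (Set.range fun i : Fin N =>
      (X (Sum.inr i) : MvPolynomial (Fin q ⊕ Fin N) k)))
    (hfsyz : aeval (Sum.elim X g) f = 0) :
    initialForm (Sum.elim lam fun i => maxWeight lam (g i)) f ∈
        Ideal.span (Set.range fun i : Fin N =>
          (X (Sum.inr i) : MvPolynomial (Fin q ⊕ Fin N) k)) ∧
    aeval (Sum.elim X fun i => initialForm lam (g i))
        (initialForm (Sum.elim lam fun i => maxWeight lam (g i)) f) = 0 := by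
  classical
  set lam' : Fin q ⊕ Fin N → ℤ := Sum.elim lam fun i => maxWeight lam (g i) with hlam'
  set W : ℤ := maxWeight lam' f with hW
  have hinit : initialForm lam' f = weightedHomogeneousComponent lam' W f :=
    initialForm_eq lam' f hf
  have hsupp : (initialForm lam' f).support ⊆ f.support := by
    rw [hinit]
    intro e he
    rw [mem_support_iff, coeff_weightedHomogeneousComponent] at he
    rw [mem_support_iff]
    split_ifs at he with h
    · exact he
    · exact absurd rfl he
  have hrange : (Set.range fun i : Fin N =>
      (X (Sum.inr i) : MvPolynomial (Fin q ⊕ Fin N) k)) = X '' (Set.range Sum.inr) := by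
    rw [← Set.range_comp]; rfl
  constructor
  · rw [hrange, mem_ideal_span_X_image]
    rw [hrange, mem_ideal_span_X_image] at hfε
    intro m hm
    exact hfε m (hsupp hm)
  · -- the substitution part
    set T : Fin q ⊕ Fin N → MvPolynomial (Fin q) k :=
      Sum.elim X fun i => initialForm lam (g i) with hT'
    have hBdd : ∀ j, Bdd lam (lam' j) (Sum.elim X g j) := by
      rintro (a | i)
      · intro d hd
        rw [Sum.elim_inl, support_X, Finset.mem_singleton] at hd
        subst hd
        simp [Finsupp.weight_apply, Finsupp.sum_single_index, hlam']
      · exact bdd_maxWeight lam (g i)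
    have hTc : ∀ j, weightedHomogeneousComponent lam (lam' j) (Sum.elim X g j) = T j := by
      rintro (a | i)
      · exact comp_eq_self_of_homog (isWeightedHomogeneous_X k lam a)
      · exact (initialForm_eq lam (g i) (hg0 i)).symm
    have h0 := congrArg (weightedHomogeneousComponent lam W) hfsyz
    rw [map_zero] at h0
    have expand : aeval (Sum.elim X g) f
        = ∑ d ∈ f.support, aeval (Sum.elim X g) (monomial d (coeff d f)) := by
      conv_lhs => rw [f.as_sum]
      rw [map_sum]
    rw [expand, map_sum] at h0
    have step : ∀ d ∈ f.support,
        weightedHomogeneousComponent lam W (aeval (Sum.elim X g) (monomial d (coeff d f)))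
          = if Finsupp.weight lam' d = W then aeval T (monomial d (coeff d f)) else 0 := by
      intro d hd
      have hm := comp_aeval_monomial lam' (Sum.elim X g) hBdd d (coeff d f)
      by_cases hdW : Finsupp.weight lam' d = W
      · rw [if_pos hdW, ← hdW, hm.2, aeval_monomial']
        congr 1
        exact Finset.prod_congr rfl fun j _ => by rw [hTc j]
      · rw [if_neg hdW]
        have hle : Finsupp.weight lam' d ≤ W := by
          rw [← monWeight_eq_weight]; exact le_maxWeight lam' hd
        exact comp_eq_zero_of_lt hm.1 (lt_of_le_of_ne hle hdW)
    rw [Finset.sum_congr rfl step, ← Finset.sum_filter] at h0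
    rw [hinit, weightedHomogeneousComponent_apply, map_sum]
    convert h0 using 2
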